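/- For every sequential reserve system, there exists an eligibility-compliant matching that simultaneously has maximum cardinality and is a maximum beneficiary assignment. -/

import Mathlib

open Finset

variable {I C : Type*}

/-- Agent `i` is eligible for category `c` when `i ≻_c ∅`. -/
def Eligible (prio : C → Option I → Option I → Prop) (i : I) (c : C) : Prop :=
  prio c (some i) none

/-- `μ` is a matching: the set of agents assigned to each category `c`
has at most `q c` elements. -/
def IsMatching [Fintype I] [DecidableEq C] (q : C → ℕ) (μ : I → Option C) : Prop :=
  ∀ c : C, (Finset.univ.filter (fun i => μ i = some c)).card ≤ q c

/-- `μ` is eligibility-compliant: assigned agents are eligible. -/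
def Compliant (prio : C → Option I → Option I → Prop) (μ : I → Option C) : Prop :=
  ∀ (i : I) (c : C), μ i = some c → Eligible prio i c

/-- The number of agents matched under `μ`. -/
def matchedCount [Fintype I] (μ : I → Option C) : ℕ :=
  (Finset.univ.filter (fun i => (μ i).isSome)).card

/-- `μ` has maximum cardinality among eligibility-compliant matchings. -/
def MaxCard [Fintype I] [DecidableEq C] (q : C → ℕ)
    (prio : C → Option I → Option I → Prop) (μ : I → Option C) : Prop :=
  ∀ μ' : I → Option C, IsMatching q μ' → Compliant prio μ' →
    matchedCount μ' ≤ matchedCount μ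

/-- Non-wastefulness: an eligible unmatched agent implies the category is full. -/
def NonWasteful [Fintype I] [DecidableEq C] (q : C → ℕ)
    (prio : C → Option I → Option I → Prop) (μ : I → Option C) : Prop :=
  ∀ (i : I) (c : C), Eligible prio i c → μ i = none →
    (Finset.univ.filter (fun j => μ j = some c)).card = q c

/-- Respect for priorities: a matched agent has higher priority (at its
category) than every unmatched agent. -/
def RespectsPriorities (prio : C → Option I → Option I → Prop)
    (μ : I → Option C) : Prop :=
  ∀ (i i' : I) (c : C), μ i = some c → μ i' = none → prio c (some i) (some i')

/-- `μ'` is obtained from `μ` by a swap step at category `c`: an unmatched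
agent `i`, eligible for `c`, replaces the `≻_c`-least agent `i'` currently
assigned to `c`, where `i ≻_c i'`. -/
def SwapStep (prio : C → Option I → Option I → Prop) (c : C)
    (μ μ' : I → Option C) : Prop :=
  ∃ i i' : I,
    μ i = none ∧ Eligible prio i c ∧
    μ i' = some c ∧
    (∀ j : I, μ j = some c → j ≠ i' → prio c (some j) (some i')) ∧
    prio c (some i) (some i') ∧
    μ' i = some c ∧ μ' i' = none ∧
    (∀ j : I, j ≠ i → j ≠ i' → μ' j = μ j)

/-- One swap step between eligibility-compliant matchings. -/
def SwapRel [Fintype I] [DecidableEq C] (q : C → ℕ)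
    (prio : C → Option I → Option I → Prop) (μ μ' : I → Option C) : Prop :=
  IsMatching q μ ∧ Compliant prio μ ∧ IsMatching q μ' ∧ Compliant prio μ' ∧
    ∃ c : C, SwapStep prio c μ μ'

/-- `μ` is terminal: no swap step applies to `μ`. -/
def Terminal (prio : C → Option I → Option I → Prop) (μ : I → Option C) : Prop :=
  ¬ ∃ (i i' : I) (c : C),
      μ i = none ∧ Eligible prio i c ∧ μ i' = some c ∧
      (∀ j : I, μ j = some c → j ≠ i' → prio c (some j) (some i')) ∧
      prio c (some i) (some i')

/-- The strict part `▷` of the precedence preorder, extended to `C ∪ {∅}`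
by `c ▷ ∅` for every category `c`. -/
def StrictPrec (prec : C → C → Prop) : Option C → Option C → Prop
  | some c, some c' => prec c c' ∧ ¬ prec c' c
  | some _, none => True
  | none, _ => False

/-- The number of agents assigned to preferential treatment categories. -/
def benefCount [Fintype I] [DecidableEq C] (Cstar : Finset C)
    (μ : I → Option C) : ℕ :=
  ∑ c ∈ Cstar, (Finset.univ.filter (fun i => μ i = some c)).card

/-- `μ` is a maximum beneficiary assignment. -/
def MaxBenef [Fintype I] [DecidableEq C] (q : C → ℕ)
    (prio : C → Option I → Option I → Prop) (Cstar : Finset C)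
    (μ : I → Option C) : Prop :=
  ∀ μ' : I → Option C, IsMatching q μ' → Compliant prio μ' →
    benefCount Cstar μ' ≤ benefCount Cstar μ

/-- Order preservation by swapping. -/
def OrderPresSwap (prio : C → Option I → Option I → Prop) (prec : C → C → Prop)
    (μ : I → Option C) : Prop :=
  ¬ ∃ (i j : I) (ci cj : C),
      μ i = some ci ∧ μ j = some cj ∧
      StrictPrec prec (some cj) (some ci) ∧
      prio cj (some i) (some j) ∧
      Eligible prio j ci ∧ Eligible prio i cj

/-- Respect for precedence over categories. -/
def RespectsPrec [Fintype I] [DecidableEq C] (q : C → ℕ)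
    (prio : C → Option I → Option I → Prop) (Cstar : Finset C)
    (prec : C → C → Prop) (μ : I → Option C) : Prop :=
  ¬ ∃ (i j : I) (cj : C),
      μ j = some cj ∧
      StrictPrec prec (some cj) (μ i) ∧
      prio cj (some i) (some j) ∧
      ∃ μ' : I → Option C,
        IsMatching q μ' ∧ Compliant prio μ' ∧
        (∀ (k : I) (ck : C), μ k = some ck →
          StrictPrec prec (some ck) (some cj) → μ' k = μ k) ∧
        (∀ ℓ : I, μ ℓ = some cj → prio cj (some ℓ) (some i) → μ' ℓ = μ ℓ) ∧
        μ' i = some cj ∧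
        MaxCard q prio μ' ∧ MaxBenef q prio Cstar μ'

/-- Order preservation for a hybrid sequential reserve system with open
categories `c01` (processed first) and `c02` (processed last). -/
def OrderPresHybrid (prio : C → Option I → Option I → Prop) (Cstar : Finset C)
    (c01 c02 : C) (μ : I → Option C) : Prop :=
  ∀ (i j : I) (cj : C), μ j = some cj → prio cj (some i) (some j) →
    ((∀ ci : C, μ i = some ci → (ci ∈ Cstar ∨ ci = c02) →
        Eligible prio j ci → cj ≠ c01) ∧
     ((cj ∈ Cstar ∨ cj = c01) → Eligible prio i cj → μ i ≠ some c02))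

/-- `P'` is an `i`-improvement of `P`: the orders agree off `i`, and `i`'s
priority weakly increases in every category. -/
def Improves (i : I) (P P' : C → Option I → Option I → Prop) : Prop :=
  ∀ c : C,
    (∀ x y : Option I, x ≠ some i → y ≠ some i → (P' c x y ↔ P c x y)) ∧
    (∀ x : Option I, x ≠ some i → P c (some i) x → P' c (some i) x)

/-- Augmenting lemma: if a compliant matching `μ` matches fewer agents than a
compliant matching `ν`, then `μ` can be improved by one matched agent without
decreasing the number of beneficiaries. -/
lemma augment_aux [Fintype I] [DecidableEq C] [DecidableEq I]
    (q : C → ℕ) (prio : C → Option I → Option I → Prop) (Cstar : Finset C)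
    (ν : I → Option C) (hνm : IsMatching q ν) (hνc : Compliant prio ν) :
    ∀ n : ℕ, ∀ μ : I → Option C,
      (Finset.univ.filter (fun i => μ i ≠ ν i)).card = n →
      IsMatching q μ → Compliant prio μ → matchedCount μ < matchedCount ν →
      ∃ μ' : I → Option C, IsMatching q μ' ∧ Compliant prio μ' ∧
        matchedCount μ' = matchedCount μ + 1 ∧
        benefCount Cstar μ ≤ benefCount Cstar μ' := by
  intro n
  induction n using Nat.strong_induction_on with
  | _ n ih =>
  intro μ hD hμm hμc hlt
  have hsub : ¬ (Finset.univ.filter fun i => (ν i).isSome) ⊆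
      (Finset.univ.filter fun i => (μ i).isSome) := by
    intro h
    exact absurd (Finset.card_le_card h) (by simpa [matchedCount] using hlt.not_ge)
  obtain ⟨i0, hi0ν, hi0μ⟩ := Finset.not_subset.mp hsub
  simp only [mem_filter, mem_univ, true_and] at hi0ν hi0μ
  obtain ⟨c0, hc0⟩ := Option.isSome_iff_exists.mp hi0ν
  have hμi0 : μ i0 = none := Option.not_isSome_iff_eq_none.mp hi0μ
  have heli0 : Eligible prio i0 c0 := hνc i0 c0 hc0
  by_cases hfull : (Finset.univ.filter fun j => μ j = some c0).card < q c0
  · -- Case A: c0 is not full; just add i0.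
    set μ' := Function.update μ i0 (some c0) with hμ'
    have hFc0 : (Finset.univ.filter fun j => μ' j = some c0)
        = insert i0 (Finset.univ.filter fun j => μ j = some c0) := by
      ext j
      by_cases hj : j = i0 <;>
        simp [hμ', Function.update_apply, hj]
    have hFc : ∀ c : C, c ≠ c0 →
        (Finset.univ.filter fun j => μ' j = some c)
          = (Finset.univ.filter fun j => μ j = some c) := by
      intro c hc
      ext j
      by_cases hj : j = i0 <;>
        simp [hμ', Function.update_apply, hj, hμi0, Ne.symm hc, hc]
    have hi0notin : i0 ∉ (Finset.univ.filter fun j => μ j = some c0) := by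
      simp [hμi0]
    refine ⟨μ', ?_, ?_, ?_, ?_⟩
    · intro c
      by_cases hc : c = c0
      · subst hc
        rw [hFc0, Finset.card_insert_of_notMem hi0notin]
        omega
      · rw [hFc c hc]; exact hμm c
    · intro j c hj
      by_cases hjj : j = i0
      · subst hjj
        rw [hμ', Function.update_self] at hj
        cases hj
        exact heli0
      · rw [hμ', Function.update_of_ne hjj] at hj
        exact hμc j c hj
    · have : (Finset.univ.filter fun i => (μ' i).isSome)
          = insert i0 (Finset.univ.filter fun i => (μ i).isSome) := by
        ext j
        by_cases hj : j = i0 <;>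
          simp [hμ', Function.update_apply, hj, hμi0]
      rw [matchedCount, this, Finset.card_insert_of_notMem (by simp [hμi0]),
        matchedCount]
    · refine Finset.sum_le_sum fun c _ => Finset.card_le_card fun j hj => ?_
      simp only [mem_filter, mem_univ, true_and] at hj ⊢
      have hjne : j ≠ i0 := fun h => by simp [h, hμi0] at hj
      rw [hμ', Function.update_of_ne hjne]
      exact hj
  · -- Case B: c0 is full; swap out a μ-agent not matched to c0 by ν.
    have hcard0 : (Finset.univ.filter fun j => μ j = some c0).card = q c0 :=
      le_antisymm (hμm c0) (not_lt.mp hfull)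
    have hi0B : i0 ∈ (Finset.univ.filter fun j => ν j = some c0) := by simp [hc0]
    have hi0A : i0 ∉ (Finset.univ.filter fun j => μ j = some c0) := by simp [hμi0]
    have hns : ¬ (Finset.univ.filter fun j => μ j = some c0) ⊆
        (Finset.univ.filter fun j => ν j = some c0) := by
      intro h
      have := Finset.eq_of_subset_of_card_le h (by rw [hcard0]; exact hνm c0)
      rw [this] at hi0A
      exact hi0A hi0B
    obtain ⟨i1, hi1A, hi1B⟩ := Finset.not_subset.mp hns
    simp only [mem_filter, mem_univ, true_and] at hi1A hi1B
    have hne01 : i0 ≠ i1 := fun h => by rw [h, hi1A] at hμi0; exact nomatch hμi0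
    set μ' := Function.update (Function.update μ i1 none) i0 (some c0) with hμ'
    have hμ'i0 : μ' i0 = some c0 := by simp [hμ']
    have hμ'i1 : μ' i1 = none := by
      rw [hμ', Function.update_of_ne (Ne.symm hne01), Function.update_self]
    have hμ'j : ∀ j, j ≠ i0 → j ≠ i1 → μ' j = μ j := by
      intro j h0 h1
      rw [hμ', Function.update_of_ne h0, Function.update_of_ne h1]
    have hFc0 : (Finset.univ.filter fun j => μ' j = some c0)
        = insert i0 ((Finset.univ.filter fun j => μ j = some c0).erase i1) := by
      ext j
      by_cases hj0 : j = i0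
      · simp [hj0, hμ'i0]
      · by_cases hj1 : j = i1
        · simp [hj1, hμ'i1, Ne.symm hne01]
        · simp [hμ'j j hj0 hj1, hj0, hj1]
    have hi1mem : i1 ∈ (Finset.univ.filter fun j => μ j = some c0) := by simp [hi1A]
    have hcards : ∀ c : C, (Finset.univ.filter fun j => μ' j = some c).card
        = (Finset.univ.filter fun j => μ j = some c).card := by
      intro c
      by_cases hc : c = c0
      · rw [hc, hFc0, Finset.card_insert_of_notMem (by simp [hμi0]),
          Finset.card_erase_of_mem hi1mem]
        have : 0 < (Finset.univ.filter fun j => μ j = some c0).card :=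
          Finset.card_pos.mpr ⟨i1, hi1mem⟩
        omega
      · congr 1
        ext j
        by_cases hj0 : j = i0
        · simp only [hj0, hμ'i0, hμi0, mem_filter, mem_univ, true_and]
          simp [Ne.symm hc]
        · by_cases hj1 : j = i1
          · simp only [hj1, hμ'i1, hi1A, mem_filter, mem_univ, true_and]
            simp [Ne.symm hc]
          · simp [hμ'j j hj0 hj1]
    have hμ'm : IsMatching q μ' := fun c => (hcards c) ▸ hμm c
    have hμ'c : Compliant prio μ' := by
      intro j c hj
      by_cases hj0 : j = i0
      · subst hj0; rw [hμ'i0] at hj; cases hj; exact heli0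
      · by_cases hj1 : j = i1
        · rw [hj1, hμ'i1] at hj; exact nomatch hj
        · exact hμc j c ((hμ'j j hj0 hj1) ▸ hj)
    have hmc : matchedCount μ' = matchedCount μ := by
      have hset : (Finset.univ.filter fun i => (μ' i).isSome)
          = insert i0 ((Finset.univ.filter fun i => (μ i).isSome).erase i1) := by
        ext j
        by_cases hj0 : j = i0
        · simp [hj0, hμ'i0]
        · by_cases hj1 : j = i1
          · simp [hj1, hμ'i1, Ne.symm hne01]
          · simp [hμ'j j hj0 hj1, hj0, hj1]
      have hi1m : i1 ∈ (Finset.univ.filter fun i => (μ i).isSome) := by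
        simp [hi1A]
      rw [matchedCount, hset, Finset.card_insert_of_notMem (by simp [hμi0]),
        Finset.card_erase_of_mem hi1m, matchedCount]
      have : 0 < (Finset.univ.filter fun i => (μ i).isSome).card :=
        Finset.card_pos.mpr ⟨i1, hi1m⟩
      omega
    have hbc : benefCount Cstar μ' = benefCount Cstar μ :=
      Finset.sum_congr rfl fun c _ => hcards c
    -- the difference set strictly decreases
    have hi0D : i0 ∈ (Finset.univ.filter fun i => μ i ≠ ν i) := by
      simp [hμi0, hc0]
    have hDsub : (Finset.univ.filter fun i => μ' i ≠ ν i)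
        ⊆ (Finset.univ.filter fun i => μ i ≠ ν i).erase i0 := by
      intro j hj
      simp only [mem_filter, mem_univ, true_and] at hj
      by_cases hj0 : j = i0
      · exact absurd (by rw [hj0, hμ'i0, hc0]) hj
      · rw [Finset.mem_erase]
        refine ⟨hj0, ?_⟩
        simp only [mem_filter, mem_univ, true_and]
        by_cases hj1 : j = i1
        · rw [hj1, hi1A]; exact fun h => hi1B h.symm
        · rwa [← hμ'j j hj0 hj1]
    have hDlt : (Finset.univ.filter fun i => μ' i ≠ ν i).card < n := by
      calc (Finset.univ.filter fun i => μ' i ≠ ν i).card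
          ≤ ((Finset.univ.filter fun i => μ i ≠ ν i).erase i0).card :=
            Finset.card_le_card hDsub
        _ < (Finset.univ.filter fun i => μ i ≠ ν i).card :=
            Finset.card_erase_lt_of_mem hi0D
        _ = n := hD
    obtain ⟨μ'', h1, h2, h3, h4⟩ := ih _ hDlt μ' rfl hμ'm hμ'c (hmc ▸ hlt)
    exact ⟨μ'', h1, h2, by omega, hbc ▸ h4⟩

/-- Every sequential reserve system admits an
eligibility-compliant matching that simultaneously has maximum cardinality
and is a maximum beneficiary assignment. -/
theorem exists_maxCard_maxBenef
    [Fintype I] [Fintype C] [DecidableEq C]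
    (q : C → ℕ) (prio : C → Option I → Option I → Prop)
    (hstrict : ∀ c : C, IsStrictTotalOrder (Option I) (prio c))
    (Cstar : Finset C) (prec : C → C → Prop)
    (hTrans : ∀ a b c : C, prec a b → prec b c → prec a c)
    (hTotal : ∀ a b : C, prec a b ∨ prec b a) :
    ∃ μ : I → Option C,
      IsMatching q μ ∧ Compliant prio μ ∧ MaxCard q prio μ ∧
        MaxBenef q prio Cstar μ := by
  classical
  -- maximize benefCount lexicographically before matchedCount
  set F : (I → Option C) → ℕ :=
    fun μ => benefCount Cstar μ * (Fintype.card I + 1) + matchedCount μ with hF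
  set S : Finset (I → Option C) :=
    Finset.univ.filter (fun μ => IsMatching q μ ∧ Compliant prio μ) with hS
  have hSne : S.Nonempty := by
    refine ⟨fun _ => none, ?_⟩
    simp only [hS, mem_filter, mem_univ, true_and]
    exact ⟨fun c => by simp, fun i c h => by simp at h⟩
  obtain ⟨μ, hμS, hμmax⟩ := S.exists_max_image F hSne
  simp only [hS, mem_filter, mem_univ, true_and] at hμS
  obtain ⟨hμm, hμc⟩ := hμS
  have hmle : ∀ ρ : I → Option C, matchedCount ρ ≤ Fintype.card I := by
    intro ρ
    exact (Finset.card_le_card (Finset.filter_subset _ _)).trans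
      (le_of_eq (Finset.card_univ))
  have hmaxF : ∀ ρ : I → Option C, IsMatching q ρ → Compliant prio ρ →
      F ρ ≤ F μ := by
    intro ρ h1 h2
    exact hμmax ρ (by simp [hS, h1, h2])
  have hMB : MaxBenef q prio Cstar μ := by
    intro ρ h1 h2
    have h3 := hmaxF ρ h1 h2
    have h4 := hmle ρ
    have h5 := hmle μ
    by_contra hcon
    push_neg at hcon
    have : benefCount Cstar μ + 1 ≤ benefCount Cstar ρ := hcon
    simp only [hF] at h3
    nlinarith
  refine ⟨μ, hμm, hμc, ?_, hMB⟩
  intro ν h1 h2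
  by_contra hcon
  push_neg at hcon
  obtain ⟨μ', hm', hc', hcount, hben⟩ :=
    augment_aux q prio Cstar ν h1 h2 _ μ rfl hμm hμc hcon
  have := hmaxF μ' hm' hc'
  simp only [hF] at this
  have hmul : benefCount Cstar μ * (Fintype.card I + 1)
      ≤ benefCount Cstar μ' * (Fintype.card I + 1) :=
    Nat.mul_le_mul_right _ hben
  omega
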